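/- Let W be a finite word over an alphabet D and let Γ be a maximal noncrossing inverse pairing on W (maximal with respect to inclusion among noncrossing inverse pairings). Let W₀ be the subword of W obtained by restricting W to the indices not covered by any pair of Γ. Then W₀ represents the same element of the free group on D as W, and W₀ is a reduced word. -/

import Mathlib

namespace EarringPaper

variable {D : Type*}

abbrev Letter (D : Type*) := D × Bool

def IsInvLetter (x y : Letter D) : Prop := x.1 = y.1 ∧ x.2 = !y.2

/-- A word is reduced if no two consecutive letters are formal inverses of each other. -/
def IsReduced (L : List (Letter D)) : Prop := List.Chain' (fun x y => ¬IsInvLetter x y) L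

structure NCIP (W : List (Letter D)) (Γ : Set (Fin W.length × Fin W.length)) : Prop where
  lt : ∀ p ∈ Γ, p.1 < p.2
  inv : ∀ p ∈ Γ, IsInvLetter (W.get p.1) (W.get p.2)
  disj : ∀ p ∈ Γ, ∀ q ∈ Γ, p ≠ q → p.1 ≠ q.1 ∧ p.1 ≠ q.2 ∧ p.2 ≠ q.1 ∧ p.2 ≠ q.2
  noncross : ∀ p ∈ Γ, ∀ q ∈ Γ, ¬(p.1 < q.1 ∧ q.1 < p.2 ∧ p.2 < q.2)
  covered : ∀ p ∈ Γ, ∀ k, p.1 ≤ k → k ≤ p.2 → ∃ q ∈ Γ, q.1 = k ∨ q.2 = k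

theorem mk_cancel {A B : List (Letter D)} {x y : Letter D} (h : IsInvLetter x y) :
    FreeGroup.mk (A ++ x :: y :: B) = FreeGroup.mk (A ++ B) := by
  obtain ⟨h1, h2⟩ := h
  have hx : x = (y.1, !y.2) := Prod.ext h1 h2
  rw [hx]
  have hs := @FreeGroup.Red.Step.not D A B y.1 (!y.2)
  rw [Bool.not_not] at hs
  exact Quot.sound hs

theorem exists_adjacent_pair {W : List (Letter D)} {Γ : Set (Fin W.length × Fin W.length)}
    (hΓ : NCIP W Γ) (hne : Γ.Nonempty) : ∃ p ∈ Γ, (p.2 : ℕ) = (p.1 : ℕ) + 1 := by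
  obtain ⟨p, hp, hmin⟩ := Set.exists_min_image Γ (fun q => (q.2 : ℕ) - (q.1 : ℕ))
    (Set.toFinite Γ) hne
  refine ⟨p, hp, ?_⟩
  have h1 : (p.1 : ℕ) < (p.2 : ℕ) := hΓ.lt p hp
  by_contra hc
  have h2 : (p.1 : ℕ) + 1 < (p.2 : ℕ) := by omega
  have hk : (p.1 : ℕ) + 1 < W.length := lt_trans h2 p.2.isLt
  obtain ⟨q, hq, hq'⟩ := hΓ.covered p hp ⟨(p.1 : ℕ) + 1, hk⟩
    (by rw [Fin.le_def]; exact Nat.le_succ _)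
    (by rw [Fin.le_def]; exact le_of_lt h2)
  have hq1 : (q.1 : ℕ) < (q.2 : ℕ) := hΓ.lt q hq
  have hqp : q ≠ p := by
    rintro rfl
    rcases hq' with h | h
    · have := congrArg Fin.val h; simp at this
    · have := congrArg Fin.val h; simp at this; omega
  have hd := hΓ.disj q hq p hp hqp
  have hd1 : (q.1 : ℕ) ≠ (p.1 : ℕ) := fun h => hd.1 (Fin.ext h)
  have hd4 : (q.2 : ℕ) ≠ (p.2 : ℕ) := fun h => hd.2.2.2 (Fin.ext h)
  rcases hq' with h | h
  · -- q.1 = p.1 + 1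
    have hv : (q.1 : ℕ) = (p.1 : ℕ) + 1 := congrArg Fin.val h
    have hC : (q.2 : ℕ) ≤ (p.2 : ℕ) := by
      by_contra hC'
      exact hΓ.noncross p hp q hq
        ⟨by rw [Fin.lt_def]; omega, by rw [Fin.lt_def]; omega, by rw [Fin.lt_def]; omega⟩
    have := hmin q hq
    omega
  · -- q.2 = p.1 + 1
    have hv : (q.2 : ℕ) = (p.1 : ℕ) + 1 := congrArg Fin.val h
    exact hΓ.noncross q hq p hp
      ⟨by rw [Fin.lt_def]; omega, by rw [Fin.lt_def]; omega, by rw [Fin.lt_def]; omega⟩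

set_option maxHeartbeats 1000000 in
open Classical in
theorem mk_filter_eq (N : ℕ) : ∀ (W : List (Letter D)), W.length ≤ N →
    ∀ (Γ : Set (Fin W.length × Fin W.length)), NCIP W Γ →
    FreeGroup.mk (((List.finRange W.length).filter
      (fun i => decide (¬∃ p ∈ Γ, p.1 = i ∨ p.2 = i))).map W.get) = FreeGroup.mk W := by
  induction N with
  | zero =>
    intro W hW Γ _
    have hWnil : W = [] := List.length_eq_zero_iff.mp (Nat.le_zero.mp hW)
    subst hWnil
    simp
  | succ N ih =>
    intro W hW Γ hΓ
    by_cases hne : Γ.Nonempty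
    · obtain ⟨p, hp, hadj⟩ := exists_adjacent_pair hΓ hne
      set i : ℕ := (p.1 : ℕ) with hidef
      have h2n : i + 1 < W.length := hadj ▸ p.2.isLt
      have hi2 : i + 2 ≤ W.length := h2n
      set W' : List (Letter D) := W.take i ++ W.drop (i + 2) with hW'
      have hm : W'.length = W.length - 2 := by
        rw [hW', List.length_append, List.length_take, List.length_drop]
        omega
      -- the embedding
      obtain ⟨e, heval⟩ : ∃ e : Fin W'.length → Fin W.length,
          ∀ k, (e k : ℕ) = if (k : ℕ) < i then (k : ℕ) else (k : ℕ) + 2 := by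
        refine ⟨fun k => if h : (k : ℕ) < i then ⟨(k : ℕ), by omega⟩
          else ⟨(k : ℕ) + 2, by have := k.isLt; omega⟩, fun k => ?_⟩
        by_cases h : (k : ℕ) < i <;> simp [h]
      have hvi : ∀ k : Fin W'.length, (e k : ℕ) ≠ i ∧ (e k : ℕ) ≠ i + 1 := by
        intro k
        have := k.isLt
        rw [heval k]
        split <;> constructor <;> omega
      have helt : ∀ k l : Fin W'.length, e k < e l ↔ k < l := by
        intro k l
        rw [Fin.lt_def, Fin.lt_def, heval k, heval l]
        split <;> split <;> omega
      have hele : ∀ k l : Fin W'.length, e k ≤ e l ↔ k ≤ l := by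
        intro k l
        rw [Fin.le_def, Fin.le_def, heval k, heval l]
        split <;> split <;> omega
      have heeq : ∀ k l : Fin W'.length, e k = e l ↔ k = l := by
        intro k l
        rw [Fin.ext_iff, Fin.ext_iff, heval k, heval l]
        split <;> split <;> omega
      have hesurj : ∀ j : Fin W.length, (j : ℕ) ≠ i → (j : ℕ) ≠ i + 1 → ∃ k, e k = j := by
        intro j hj1 hj2
        have hjlt := j.isLt
        by_cases hj : (j : ℕ) < i
        · refine ⟨⟨(j : ℕ), by omega⟩, ?_⟩
          rw [Fin.ext_iff, heval]
          show (if (j : ℕ) < i then (j : ℕ) else (j : ℕ) + 2) = (j : ℕ)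
          rw [if_pos hj]
        · refine ⟨⟨(j : ℕ) - 2, by omega⟩, ?_⟩
          rw [Fin.ext_iff, heval]
          show (if (j : ℕ) - 2 < i then (j : ℕ) - 2 else (j : ℕ) - 2 + 2) = (j : ℕ)
          rw [if_neg (by omega)]
          omega
      have hget : ∀ k : Fin W'.length, W'.get k = W.get (e k) := by
        intro k
        have hk := k.isLt
        have hk2 : (k : ℕ) < (W.take i ++ W.drop (i + 2)).length := by
          simp only [List.length_append, List.length_take, List.length_drop]; omega
        have hek := (e k).isLt
        show (W.take i ++ W.drop (i + 2))[(k : ℕ)]'hk2 = W[(e k : ℕ)]'hek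
        by_cases h : (k : ℕ) < i
        · have h1 : (e k : ℕ) = (k : ℕ) := by rw [heval]; rw [if_pos h]
          have h2 : (k : ℕ) < (W.take i).length := by
            rw [List.length_take]; omega
          rw [List.getElem_append_left h2, List.getElem_take]
          simp [h1]
        · have h1 : (e k : ℕ) = (k : ℕ) + 2 := by rw [heval]; rw [if_neg h]
          have h2 : (W.take i).length ≤ (k : ℕ) := by
            rw [List.length_take]; omega
          rw [List.getElem_append_right h2, List.getElem_drop]
          congr 1
          rw [List.length_take]
          omega
      -- the induced pairing
      set Γ' : Set (Fin W'.length × Fin W'.length) := {q | (e q.1, e q.2) ∈ Γ} with hΓ'def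
      have hmemΓ' : ∀ q : Fin W'.length × Fin W'.length, q ∈ Γ' ↔ (e q.1, e q.2) ∈ Γ :=
        fun q => Iff.rfl
      -- i and i+1 are the values of p's endpoints
      have hp2 : p.2 = ⟨i + 1, h2n⟩ := Fin.ext hadj
      have hp1 : p.1 = ⟨i, by omega⟩ := Fin.ext rfl
      -- lifting covered witnesses back
      have hback : ∀ k : Fin W'.length, (∃ q ∈ Γ, q.1 = e k ∨ q.2 = e k) →
          ∃ q' ∈ Γ', q'.1 = k ∨ q'.2 = k := by
        intro k ⟨q, hq, hqk⟩
        have hqp : q ≠ p := by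
          rintro rfl
          rcases hqk with h | h
          · exact (hvi k).1 (by rw [← h, hp1])
          · exact (hvi k).2 (by rw [← h, hp2])
        have hd := hΓ.disj q hq p hp hqp
        have hq1i : (q.1 : ℕ) ≠ i := fun h => hd.1 (by rw [hp1]; exact Fin.ext h)
        have hq1i1 : (q.1 : ℕ) ≠ i + 1 := fun h => hd.2.1 (by rw [hp2]; exact Fin.ext h)
        have hq2i : (q.2 : ℕ) ≠ i := fun h => hd.2.2.1 (by rw [hp1]; exact Fin.ext h)
        have hq2i1 : (q.2 : ℕ) ≠ i + 1 := fun h => hd.2.2.2 (by rw [hp2]; exact Fin.ext h)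
        obtain ⟨a, ha⟩ := hesurj q.1 hq1i hq1i1
        obtain ⟨b, hb⟩ := hesurj q.2 hq2i hq2i1
        refine ⟨(a, b), ?_, ?_⟩
        · show (e a, e b) ∈ Γ
          rw [ha, hb]
          exact hq
        · rcases hqk with h | h
          · left; exact (heeq a k).mp (by rw [ha, h])
          · right; exact (heeq b k).mp (by rw [hb, h])
      have hΓ' : NCIP W' Γ' := by
        constructor
        · intro q hq
          exact (helt q.1 q.2).mp (hΓ.lt _ ((hmemΓ' q).mp hq))
        · intro q hq
          rw [hget q.1, hget q.2]
          exact hΓ.inv _ ((hmemΓ' q).mp hq)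
        · intro q hq r hr hqr
          have h := hΓ.disj _ ((hmemΓ' q).mp hq) _ ((hmemΓ' r).mp hr) (by
            intro hc
            apply hqr
            have h1 := congrArg Prod.fst hc
            have h2 := congrArg Prod.snd hc
            simp only at h1 h2
            exact Prod.ext ((heeq _ _).mp h1) ((heeq _ _).mp h2))
          exact ⟨fun hc => h.1 (congrArg e hc), fun hc => h.2.1 (congrArg e hc),
            fun hc => h.2.2.1 (congrArg e hc), fun hc => h.2.2.2 (congrArg e hc)⟩
        · intro q hq r hr ⟨h1, h2, h3⟩
          exact hΓ.noncross _ ((hmemΓ' q).mp hq) _ ((hmemΓ' r).mp hr)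
            ⟨(helt _ _).mpr h1, (helt _ _).mpr h2, (helt _ _).mpr h3⟩
        · intro q hq k hk1 hk2
          exact hback k (hΓ.covered _ ((hmemΓ' q).mp hq) (e k)
            ((hele _ _).mpr hk1) ((hele _ _).mpr hk2))
      -- the filtered lists agree
      have hPP' : ∀ k : Fin W'.length,
          (decide (¬∃ q ∈ Γ', q.1 = k ∨ q.2 = k) : Bool)
            = decide (¬∃ q ∈ Γ, q.1 = e k ∨ q.2 = e k) := by
        intro k
        apply decide_eq_decide.mpr
        constructor
        · intro h hc
          exact h (hback k hc)
        · intro h ⟨q, hq, hqk⟩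
          refine h ⟨(e q.1, e q.2), (hmemΓ' q).mp hq, ?_⟩
          rcases hqk with hh | hh
          · left; rw [hh]
          · right; rw [hh]
      -- P implies not i / not i+1
      have hPi : ∀ j : Fin W.length, (¬∃ q ∈ Γ, q.1 = j ∨ q.2 = j) →
          (j : ℕ) ≠ i ∧ (j : ℕ) ≠ i + 1 := by
        intro j hj
        constructor
        · intro h
          exact hj ⟨p, hp, Or.inl (by rw [hp1]; exact Fin.ext h.symm)⟩
        · intro h
          exact hj ⟨p, hp, Or.inr (by rw [hp2]; exact Fin.ext h.symm)⟩
      -- sorted images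
      haveI : IsAntisymm (Fin W.length) (· < ·) :=
        ⟨fun a b h h' => absurd h' (lt_asymm h)⟩
      have hmape : (List.finRange W'.length).map e
          = (List.finRange W.length).filter
              (fun j : Fin W.length => decide ((j : ℕ) ≠ i) && decide ((j : ℕ) ≠ i + 1)) := by
        have hperm : List.Perm ((List.finRange W'.length).map e) ((List.finRange W.length).filter
            (fun j : Fin W.length => decide ((j : ℕ) ≠ i) && decide ((j : ℕ) ≠ i + 1))) := by
          rw [List.perm_ext_iff_of_nodup
            ((List.nodup_finRange _).map fun a b hab => (heeq a b).mp hab)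
            ((List.nodup_finRange _).filter _)]
          intro j
          simp only [List.mem_map, List.mem_finRange, true_and, List.mem_filter,
            Bool.and_eq_true, decide_eq_true_eq]
          constructor
          · rintro ⟨k, rfl⟩
            exact ⟨(hvi k).1, (hvi k).2⟩
          · rintro ⟨hj1, hj2⟩
            exact hesurj j hj1 hj2
        exact List.Perm.eq_of_pairwise'
          ((List.pairwise_lt_finRange _).map _ fun a b hab => (helt a b).mpr hab)
          ((List.pairwise_lt_finRange _).filter _) hperm
      have hfe : (List.finRange W.length).filter
            (fun j => decide (¬∃ q ∈ Γ, q.1 = j ∨ q.2 = j))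
          = ((List.finRange W.length).filter
              (fun j : Fin W.length => decide ((j : ℕ) ≠ i) && decide ((j : ℕ) ≠ i + 1))).filter
            (fun j => decide (¬∃ q ∈ Γ, q.1 = j ∨ q.2 = j)) := by
        rw [List.filter_filter]
        apply List.filter_congr
        intro a _
        by_cases h : (¬∃ q ∈ Γ, q.1 = a ∨ q.2 = a)
        · have h1 := hPi a h
          rw [decide_eq_true h, Bool.true_and, decide_eq_true h1.1,
            decide_eq_true h1.2, Bool.true_and]
        · rw [decide_eq_false h, Bool.false_and]
      -- main list identity
      have hlists : ((List.finRange W.length).filter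
            (fun j => decide (¬∃ q ∈ Γ, q.1 = j ∨ q.2 = j))).map W.get
          = ((List.finRange W'.length).filter
            (fun k => decide (¬∃ q ∈ Γ', q.1 = k ∨ q.2 = k))).map W'.get := by
        rw [hfe, ← hmape, List.filter_map, List.map_map]
        have hfcong : (List.finRange W'.length).filter
              ((fun j => decide (¬∃ q ∈ Γ, q.1 = j ∨ q.2 = j)) ∘ e)
            = (List.finRange W'.length).filter
              (fun k => decide (¬∃ q ∈ Γ', q.1 = k ∨ q.2 = k)) :=
          List.filter_congr (fun k _ => (hPP' k).symm)
        rw [hfcong]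
        apply List.map_congr_left
        intro k _
        simp only [Function.comp_apply]
        exact (hget k).symm
      -- the free group step
      have hinv : IsInvLetter (W.get ⟨i, by omega⟩) (W.get ⟨i + 1, h2n⟩) := by
        have h := hΓ.inv p hp
        have e1 : W.get p.1 = W.get ⟨i, by omega⟩ := congrArg W.get hp1
        have e2 : W.get p.2 = W.get ⟨i + 1, h2n⟩ := congrArg W.get hp2
        rw [e1, e2] at h
        exact h
      have hdrop : W.drop i = W.get ⟨i, by omega⟩ :: W.get ⟨i + 1, h2n⟩ :: W.drop (i + 2) := by
        rw [List.drop_eq_getElem_cons (show i < W.length by omega),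
          List.drop_eq_getElem_cons (show i + 1 < W.length from h2n)]
        simp [List.get_eq_getElem]
      have hsplitW : W = W.take i ++ W.get ⟨i, by omega⟩ :: W.get ⟨i + 1, h2n⟩
          :: W.drop (i + 2) := by
        have h := List.take_append_drop i W
        rw [hdrop] at h
        exact h.symm
      have hmk : FreeGroup.mk W' = FreeGroup.mk W := by
        conv_rhs => rw [hsplitW]
        rw [mk_cancel hinv]
      -- conclude
      rw [hlists, ih W' (by omega) Γ' hΓ', hmk]
    · have hfilter : (List.finRange W.length).filter
          (fun j => decide (¬∃ q ∈ Γ, q.1 = j ∨ q.2 = j)) = List.finRange W.length := by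
        apply List.filter_eq_self.mpr
        intro a _
        apply decide_eq_true
        rintro ⟨q, hq, -⟩
        exact hne ⟨q, hq⟩
      rw [hfilter, List.map_get_finRange]

set_option maxHeartbeats 1000000 in
open Classical in
/-- If `Γ` is a maximal noncrossing inverse pairing on a finite word `W`, then the subword `W₀`
obtained by deleting all indices covered by `Γ` represents the same element of the free group
as `W`, and `W₀` is reduced. -/
theorem subword_of_maximal_ncip_reduced (W : List (Letter D))
    (Γ : Set (Fin W.length × Fin W.length)) (hΓ : NCIP W Γ)
    (hmax : ∀ Γ' : Set (Fin W.length × Fin W.length), NCIP W Γ' → Γ ⊆ Γ' → Γ' = Γ) :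
    let W₀ : List (Letter D) :=
      ((List.finRange W.length).filter
        (fun i => decide (¬∃ p ∈ Γ, p.1 = i ∨ p.2 = i))).map W.get
    FreeGroup.mk W₀ = FreeGroup.mk W ∧ IsReduced W₀ := by
  intro W₀
  refine ⟨mk_filter_eq W.length W le_rfl Γ hΓ, ?_⟩
  show IsReduced (((List.finRange W.length).filter
    (fun i => decide (¬∃ p ∈ Γ, p.1 = i ∨ p.2 = i))).map W.get)
  set L : List (Fin W.length) := (List.finRange W.length).filter
    (fun i => decide (¬∃ p ∈ Γ, p.1 = i ∨ p.2 = i)) with hLdef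
  have hsorted : L.Pairwise (· < ·) := (List.pairwise_lt_finRange _).filter _
  rw [IsReduced, List.Chain', List.isChain_iff_getElem]
  intro t ht hbad
  have hlen : (L.map W.get).length = L.length := List.length_map _
  have h1 : t < L.length := by omega
  have h2 : t + 1 < L.length := by omega
  set a : Fin W.length := L.get ⟨t, h1⟩ with hadef
  set b : Fin W.length := L.get ⟨t + 1, h2⟩ with hbdef
  have hinvab : IsInvLetter (W.get a) (W.get b) := by
    have e1 : (L.map W.get).get ⟨t, by omega⟩ = W.get a := by
      rw [hadef]
      simp [List.get_eq_getElem, List.getElem_map]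
    have e2 : (L.map W.get).get ⟨t + 1, by omega⟩ = W.get b := by
      rw [hbdef]
      simp [List.get_eq_getElem, List.getElem_map]
    rw [← e1, ← e2]
    exact hbad
  have hab : a < b := hsorted.sortedLT.strictMono_get (show (⟨t, h1⟩ : Fin L.length) < ⟨t + 1, h2⟩ by
    rw [Fin.lt_def]; exact Nat.lt_succ_self t)
  have hmemL : ∀ c : Fin W.length, c ∈ L ↔ (¬∃ q ∈ Γ, q.1 = c ∨ q.2 = c) := by
    intro c
    rw [hLdef, List.mem_filter]
    simp [List.mem_finRange]
  have ha' : ¬∃ q ∈ Γ, q.1 = a ∨ q.2 = a := (hmemL a).mp (List.get_mem L ⟨t, h1⟩)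
  have hb' : ¬∃ q ∈ Γ, q.1 = b ∨ q.2 = b := (hmemL b).mp (List.get_mem L ⟨t + 1, h2⟩)
  have hbetw : ∀ c : Fin W.length, a < c → c < b → ∃ q ∈ Γ, q.1 = c ∨ q.2 = c := by
    intro c hc1 hc2
    by_contra hc
    have hcL : c ∈ L := (hmemL c).mpr hc
    obtain ⟨s, hs⟩ := List.mem_iff_get.mp hcL
    rw [← hs] at hc1 hc2
    have hst1 : (⟨t, h1⟩ : Fin L.length) < s := hsorted.sortedLT.strictMono_get.lt_iff_lt.mp hc1
    have hst2 : s < (⟨t + 1, h2⟩ : Fin L.length) := hsorted.sortedLT.strictMono_get.lt_iff_lt.mp hc2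
    have hst1' : t < (s : ℕ) := hst1
    have hst2' : (s : ℕ) < t + 1 := hst2
    omega
  -- build the bigger pairing
  have hN : NCIP W (insert (a, b) Γ) := by
    constructor
    · intro q hq
      rcases Set.mem_insert_iff.mp hq with rfl | hq
      · exact hab
      · exact hΓ.lt q hq
    · intro q hq
      rcases Set.mem_insert_iff.mp hq with rfl | hq
      · exact hinvab
      · exact hΓ.inv q hq
    · intro q hq r hr hqr
      rcases Set.mem_insert_iff.mp hq with rfl | hq <;>
        rcases Set.mem_insert_iff.mp hr with h' | hr
      · exact absurd h'.symm hqr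
      · refine ⟨?_, ?_, ?_, ?_⟩
        · intro h; exact ha' ⟨r, hr, Or.inl h.symm⟩
        · intro h; exact ha' ⟨r, hr, Or.inr h.symm⟩
        · intro h; exact hb' ⟨r, hr, Or.inl h.symm⟩
        · intro h; exact hb' ⟨r, hr, Or.inr h.symm⟩
      · subst h'
        refine ⟨?_, ?_, ?_, ?_⟩
        · intro h; exact ha' ⟨q, hq, Or.inl h⟩
        · intro h; exact hb' ⟨q, hq, Or.inl h⟩
        · intro h; exact ha' ⟨q, hq, Or.inr h⟩
        · intro h; exact hb' ⟨q, hq, Or.inr h⟩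
      · exact hΓ.disj q hq r hr hqr
    · intro q hq r hr
      rcases Set.mem_insert_iff.mp hq with rfl | hq <;>
        rcases Set.mem_insert_iff.mp hr with h' | hr
      · subst h'
        rintro ⟨hx, -, -⟩
        exact lt_irrefl _ hx
      · rintro ⟨hx1, hx2, hx3⟩
        exact hb' (hΓ.covered r hr b (le_of_lt hx2) (le_of_lt hx3))
      · subst h'
        rintro ⟨hx1, hx2, hx3⟩
        exact ha' (hΓ.covered q hq a (le_of_lt hx1) (le_of_lt hx2))
      · exact hΓ.noncross q hq r hr
    · intro q hq k hk1 hk2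
      rcases Set.mem_insert_iff.mp hq with rfl | hq
      · simp only at hk1 hk2
        rcases eq_or_lt_of_le hk1 with h | h
        · exact ⟨(a, b), Set.mem_insert _ _, Or.inl h⟩
        · rcases eq_or_lt_of_le hk2 with h' | h'
          · exact ⟨(a, b), Set.mem_insert _ _, Or.inr h'.symm⟩
          · obtain ⟨q', hq', hh⟩ := hbetw k h h'
            exact ⟨q', Set.mem_insert_of_mem _ hq', hh⟩
      · obtain ⟨q', hq', hh⟩ := hΓ.covered q hq k hk1 hk2
        exact ⟨q', Set.mem_insert_of_mem _ hq', hh⟩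
  have heq := hmax _ hN (Set.subset_insert _ _)
  have : (a, b) ∈ Γ := heq ▸ Set.mem_insert _ _
  exact ha' ⟨(a, b), this, Or.inl rfl⟩

end EarringPaper
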